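/- Let a, b, c, d, e be real numbers with a² + b² = 1, c² + d² + e² = 1, and b ≥ 0. Then b + √(1 − c²) ≥ √(1 − (a·c + b·d)²). -/
import Mathlib

/-- Coordinate form of the spherical-triangle sine inequality for the unit
vectors `(1,0,0)`, `(a,b,0)`, `(c,d,e)` in ℝ³ (inequality (11) of the paper). -/
theorem sineTriangleCoord (a b c d e : ℝ) (hab : a ^ 2 + b ^ 2 = 1)
    (hcde : c ^ 2 + d ^ 2 + e ^ 2 = 1) (hb : 0 ≤ b) :
    b + Real.sqrt (1 - c ^ 2) ≥ Real.sqrt (1 - (a * c + b * d) ^ 2) := by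
  have hc2 : (0:ℝ) ≤ 1 - c ^ 2 := by nlinarith [sq_nonneg d, sq_nonneg e]
  set s := Real.sqrt (1 - c ^ 2) with hsdef
  have hs0 : 0 ≤ s := Real.sqrt_nonneg _
  have hs2 : s ^ 2 = 1 - c ^ 2 := Real.sq_sqrt hc2
  have hd : |d| ≤ s := by
    rw [hsdef, ← Real.sqrt_sq_eq_abs]
    exact Real.sqrt_le_sqrt (by nlinarith [sq_nonneg e])
  have hac : |a * c| ≤ 1 := by
    rw [abs_le]
    constructor <;> nlinarith [sq_nonneg (a + c), sq_nonneg (a - c), sq_nonneg d, sq_nonneg e, sq_nonneg b]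
  have h1 : -|d| ≤ a * c * d := by
    have h2 : |a * c * d| ≤ |d| := by
      rw [abs_mul]
      calc |a * c| * |d| ≤ 1 * |d| := mul_le_mul_of_nonneg_right hac (abs_nonneg d)
        _ = |d| := one_mul _
    linarith [neg_abs_le (a * c * d)]
  have key : 1 - (a * c + b * d) ^ 2 ≤ (b + s) ^ 2 := by
    nlinarith [mul_nonneg hb (by linarith : (0:ℝ) ≤ a * c * d + |d|),
      mul_nonneg hb (by linarith : (0:ℝ) ≤ s - |d|),
      sq_nonneg (b * d), sq_nonneg (b * e), hs2, hab]
  calc Real.sqrt (1 - (a * c + b * d) ^ 2) ≤ Real.sqrt ((b + s) ^ 2) := Real.sqrt_le_sqrt key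
    _ = b + s := Real.sqrt_sq (by positivity)
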